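/- For every real ν > 0 and every real x > 0, the chi-squared cumulative distribution functions satisfy F_{ν+4}(x)·F_ν(x)/F_{ν+2}(x)² > (ν+2)/(ν+4). -/

import Mathlib

open Real MeasureTheory intervalIntegral Set

/-- Chi-squared cumulative distribution function with `ν` degrees of freedom. -/
noncomputable def chiCDF (ν x : ℝ) : ℝ :=
  ((2 : ℝ) ^ (ν / 2) * Real.Gamma (ν / 2))⁻¹ *
    ∫ t in (0 : ℝ)..x, t ^ (ν / 2 - 1) * Real.exp (-t / 2)

private lemma chi_intAux (q : ℝ) (hq : -1 < q) (a b : ℝ) :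
    IntervalIntegrable (fun t : ℝ => t ^ q * Real.exp (-t / 2)) volume a b :=
  (intervalIntegrable_rpow' hq).mul_continuousOn
    (Continuous.continuousOn (by continuity))

private lemma chi_posAux (q : ℝ) (hq : -1 < q) {x : ℝ} (hx : 0 < x) :
    0 < ∫ t in (0:ℝ)..x, t ^ q * Real.exp (-t / 2) := by
  apply intervalIntegral_pos_of_pos_on (chi_intAux q hq 0 x)
  · intro t ht
    exact mul_pos (Real.rpow_pos_of_pos ht.1 q) (Real.exp_pos _)
  · exact hx

private lemma chi_recAux (q : ℝ) (hq : 0 < q) {x : ℝ} (hx : 0 < x) :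
    2 * q * (∫ t in (0:ℝ)..x, t ^ (q - 1) * Real.exp (-t / 2))
      = (∫ t in (0:ℝ)..x, t ^ q * Real.exp (-t / 2))
        + 2 * x ^ q * Real.exp (-x / 2) := by
  have key : (∫ t in (0:ℝ)..x,
      (t ^ q * Real.exp (-t/2) - 2 * q * (t ^ (q-1) * Real.exp (-t/2))))
      = (-2 * x ^ q * Real.exp (-x/2)) - (0 : ℝ) := by
    apply integral_eq_sub_of_hasDerivAt_of_tendsto (f := fun t : ℝ => -2 * t ^ q * Real.exp (-t/2)) hx
    · intro t ht
      have h1 : HasDerivAt (fun t : ℝ => t ^ q) (q * t ^ (q-1)) t :=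
        Real.hasDerivAt_rpow_const (Or.inl ht.1.ne')
      have hi : HasDerivAt (fun t : ℝ => -t / 2) (-1 / 2) t := by
        simpa using ((hasDerivAt_id t).neg.div_const 2)
      have h2 : HasDerivAt (fun t : ℝ => Real.exp (-t/2)) (Real.exp (-t/2) * (-1/2)) t :=
        hi.exp
      have := (h1.const_mul (-2 : ℝ)).mul h2
      convert this using 1
      · rfl
      · rfl
      ring
    · exact (chi_intAux q (by linarith) 0 x).sub
        (((chi_intAux (q-1) (by linarith) 0 x)).const_mul (2*q))
    · have hc : ContinuousAt (fun t : ℝ => -2 * t ^ q * Real.exp (-t/2)) 0 := by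
        apply ContinuousAt.mul
        apply ContinuousAt.mul continuousAt_const
        · exact Real.continuousAt_rpow_const 0 q (Or.inr hq.le)
        · exact (Real.continuous_exp.comp (by continuity)).continuousAt
      have hT : Filter.Tendsto (fun t : ℝ => -2 * t ^ q * Real.exp (-t/2))
          (nhdsWithin 0 (Set.Ioi 0)) (nhds (-2 * (0:ℝ) ^ q * Real.exp (-0/2))) :=
        hc.continuousWithinAt.tendsto
      simpa [Real.zero_rpow hq.ne'] using hT
    · have hc : ContinuousAt (fun t : ℝ => -2 * t ^ q * Real.exp (-t/2)) x := by
        apply ContinuousAt.mul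
        apply ContinuousAt.mul continuousAt_const
        · exact Real.continuousAt_rpow_const x q (Or.inl hx.ne')
        · exact (Real.continuous_exp.comp (by continuity)).continuousAt
      exact (hc.continuousWithinAt (s := Set.Iio x)).tendsto
  rw [intervalIntegral.integral_sub (chi_intAux q (by linarith) 0 x)
    (((chi_intAux (q-1) (by linarith) 0 x)).const_mul (2*q)),
    intervalIntegral.integral_const_mul] at key
  linarith

private lemma chi_csAux (q : ℝ) (hq : 0 < q) {x : ℝ} (hx : 0 < x) :
    (∫ t in (0:ℝ)..x, t ^ (q+1) * Real.exp (-t/2))^2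
      < (∫ t in (0:ℝ)..x, t ^ q * Real.exp (-t/2)) *
        (∫ t in (0:ℝ)..x, t ^ (q+2) * Real.exp (-t/2)) := by
  set A := ∫ t in (0:ℝ)..x, t ^ q * Real.exp (-t/2) with hAdef
  set B := ∫ t in (0:ℝ)..x, t ^ (q+1) * Real.exp (-t/2) with hBdef
  set C := ∫ t in (0:ℝ)..x, t ^ (q+2) * Real.exp (-t/2) with hCdef
  have hA : 0 < A := chi_posAux q (by linarith) hx
  set m : ℝ := B / A with hmdef
  set K : ℝ → ℝ := fun t => t ^ q * ((t - m)^2 * Real.exp (-t/2)) with hKdef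
  have hKint : ∀ a b : ℝ, IntervalIntegrable K volume a b := fun a b =>
    (intervalIntegrable_rpow' (by linarith : (-1:ℝ) < q)).mul_continuousOn
      (Continuous.continuousOn (by continuity))
  have hKpos : ∀ a b : ℝ, 0 ≤ a → a < b → b ≤ x → (m ≤ a ∨ b ≤ m) →
      0 < ∫ t in a..b, K t := by
    intro a b ha hab hbx hm
    apply intervalIntegral_pos_of_pos_on (hKint a b) _ hab
    intro t ht
    have ht0 : 0 < t := lt_of_le_of_lt ha ht.1
    have htm : t ≠ m := by
      rcases hm with h | h
      · exact ne_of_gt (lt_of_le_of_lt h ht.1)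
      · exact ne_of_lt (lt_of_lt_of_le ht.2 h)
    have hsq : (0:ℝ) < (t - m)^2 := pow_two_pos_of_ne_zero (sub_ne_zero.mpr htm)
    exact mul_pos (Real.rpow_pos_of_pos ht0 q) (mul_pos hsq (Real.exp_pos _))
  have hKposx : 0 < ∫ t in (0:ℝ)..x, K t := by
    rcases le_or_gt m 0 with hm | hm
    · exact hKpos 0 x le_rfl hx le_rfl (Or.inl hm)
    rcases lt_or_ge m x with hm2 | hm2
    · have h1 := hKpos 0 m le_rfl hm hm2.le (Or.inr le_rfl)
      have h2 := hKpos m x hm.le hm2 le_rfl (Or.inl le_rfl)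
      have := intervalIntegral.integral_add_adjacent_intervals (hKint 0 m) (hKint m x)
      linarith [this]
    · exact hKpos 0 x le_rfl hx le_rfl (Or.inr hm2)
  have hexpand : (∫ t in (0:ℝ)..x, K t) = C - 2*m*B + m^2*A := by
    have hcongr : (∫ t in (0:ℝ)..x, K t)
        = ∫ t in (0:ℝ)..x, (t ^ (q+2) * Real.exp (-t/2)
            - 2*m*(t ^ (q+1) * Real.exp (-t/2)) + m^2*(t ^ q * Real.exp (-t/2))) := by
      apply intervalIntegral.integral_congr
      intro t ht
      rw [uIcc_of_le hx.le] at ht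
      rcases eq_or_lt_of_le ht.1 with h0 | h0
      · simp [K, ← h0, Real.zero_rpow hq.ne',
          Real.zero_rpow (by linarith : q + 1 ≠ 0),
          Real.zero_rpow (by linarith : q + 2 ≠ 0)]
      · have e1 : t ^ (q+1) = t ^ q * t := Real.rpow_add_one h0.ne' q
        have e2 : t ^ (q+2) = t ^ (q+1) * t := by
          rw [show q+2 = (q+1)+1 by ring, Real.rpow_add_one h0.ne']
        simp only [K, e2, e1]
        ring
    rw [hcongr, intervalIntegral.integral_add, intervalIntegral.integral_sub,
      intervalIntegral.integral_const_mul, intervalIntegral.integral_const_mul]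
    · exact chi_intAux (q+2) (by linarith) 0 x
    · exact (chi_intAux (q+1) (by linarith) 0 x).const_mul _
    · exact (chi_intAux (q+2) (by linarith) 0 x).sub
        ((chi_intAux (q+1) (by linarith) 0 x).const_mul _)
    · exact (chi_intAux q (by linarith) 0 x).const_mul _
  rw [hexpand] at hKposx
  have hmA : m * A = B := by rw [hmdef]; exact div_mul_cancel₀ B hA.ne'
  clear_value A B C m K
  nlinarith [mul_pos hKposx hA, hmA]

set_option maxHeartbeats 1600000 in
theorem chiCDF_ratio_gt (ν x : ℝ) (hν : 0 < ν) (hx : 0 < x) :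
    chiCDF (ν + 4) x * chiCDF ν x / (chiCDF (ν + 2) x) ^ 2 > (ν + 2) / (ν + 4) := by
  set IA := ∫ t in (0:ℝ)..x, t ^ (ν/2 - 1) * Real.exp (-t/2) with hIA
  set IB := ∫ t in (0:ℝ)..x, t ^ (ν/2) * Real.exp (-t/2) with hIB
  set IC := ∫ t in (0:ℝ)..x, t ^ (ν/2 + 1) * Real.exp (-t/2) with hIC
  set ID := ∫ t in (0:ℝ)..x, t ^ (ν/2 + 2) * Real.exp (-t/2) with hID
  have hA : 0 < IA := chi_posAux _ (by linarith) hx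
  have hB : 0 < IB := chi_posAux _ (by linarith) hx
  have hC : 0 < IC := chi_posAux _ (by linarith) hx
  have hD : 0 < ID := chi_posAux _ (by linarith) hx
  set E0 := 2 * x ^ (ν/2) * Real.exp (-x/2) with hE0def
  set E1 := 2 * x ^ (ν/2 + 1) * Real.exp (-x/2) with hE1def
  set E2 := 2 * x ^ (ν/2 + 2) * Real.exp (-x/2) with hE2def
  have hE0 : 0 < E0 := by positivity
  have hE1 : 0 < E1 := by positivity
  have hE2 : 0 < E2 := by positivity
  -- recurrences
  have hr1 : ν * IA = IB + E0 := by
    have := chi_recAux (ν/2) (by linarith) hx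
    rw [hIA, hIB, hE0def]; linarith [this]
  have hr2 : (ν + 2) * IB = IC + E1 := by
    have h := chi_recAux (ν/2 + 1) (by linarith) hx
    simp only [show ν/2 + 1 - 1 = ν/2 from by ring] at h
    rw [hIB, hIC, hE1def]; linarith [h]
  have hr3 : (ν + 4) * IC = ID + E2 := by
    have h := chi_recAux (ν/2 + 2) (by linarith) hx
    simp only [show ν/2 + 2 - 1 = ν/2 + 1 from by ring] at h
    rw [hIC, hID, hE2def]; linarith [h]
  have hcs : IC^2 < IB * ID := chi_csAux (ν/2) (by linarith) hx
  have hE : E0 * E2 = E1^2 := by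
    have hxx : x ^ (ν/2) * x ^ (ν/2 + 2) = x ^ (ν/2 + 1) * x ^ (ν/2 + 1) := by
      rw [← Real.rpow_add hx, ← Real.rpow_add hx]; congr 1; ring
    rw [hE0def, hE1def, hE2def]
    linear_combination (4 * Real.exp (-x/2) * Real.exp (-x/2)) * hxx
  -- chiCDF formulas
  have hG : 0 < Real.Gamma (ν/2) := Real.Gamma_pos_of_pos (by linarith)
  have hP : 0 < (2:ℝ) ^ (ν/2) := Real.rpow_pos_of_pos two_pos _
  set P := (2:ℝ) ^ (ν/2) with hPdef
  set G := Real.Gamma (ν/2) with hGdef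
  have hGam2 : Real.Gamma ((ν+2)/2) = (ν/2) * G := by
    rw [show (ν+2)/2 = ν/2 + 1 by ring, Real.Gamma_add_one (by linarith : ν/2 ≠ 0)]
  have hGam4 : Real.Gamma ((ν+4)/2) = (ν/2 + 1) * ((ν/2) * G) := by
    rw [show (ν+4)/2 = (ν/2 + 1) + 1 by ring,
      Real.Gamma_add_one (by linarith : ν/2 + 1 ≠ 0),
      show ν/2 + 1 = ν/2 + 1 from rfl]
    congr 1
    rw [Real.Gamma_add_one (by linarith : ν/2 ≠ 0)]
  have hPow2 : (2:ℝ) ^ ((ν+2)/2) = P * 2 := by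
    rw [show (ν+2)/2 = ν/2 + 1 by ring, Real.rpow_add two_pos, Real.rpow_one]
  have hPow4 : (2:ℝ) ^ ((ν+4)/2) = P * 4 := by
    have h22 : (2:ℝ) ^ (2:ℝ) = 4 := by
      rw [show (2:ℝ) = ((2:ℕ):ℝ) from by norm_num, Real.rpow_natCast]; norm_num
    rw [show (ν+4)/2 = ν/2 + 2 by ring, Real.rpow_add two_pos, h22]
  have f0 : chiCDF ν x = (P * G)⁻¹ * IA := rfl
  have f2 : chiCDF (ν + 2) x = (P * 2 * ((ν/2) * G))⁻¹ * IB := by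
    rw [chiCDF, hPow2, hGam2]
    congr 1
    rw [hIB]
    apply intervalIntegral.integral_congr
    intro t ht
    rw [show (ν+2)/2 - 1 = ν/2 by ring]
  have f4 : chiCDF (ν + 4) x = (P * 4 * ((ν/2 + 1) * ((ν/2) * G)))⁻¹ * IC := by
    rw [chiCDF, hPow4, hGam4]
    congr 1
    rw [hIC]
    apply intervalIntegral.integral_congr
    intro t ht
    rw [show (ν+4)/2 - 1 = ν/2 + 1 by ring]
  clear_value IA IB IC ID E0 E1 E2 P G
  -- AM-GM step
  have hamgm : 2 * (IC * E1) < IB * E2 + E0 * ID := by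
    have h1 : IC^2 * E1^2 < (IB * ID) * E1^2 :=
      mul_lt_mul_of_pos_right hcs (pow_pos hE1 2)
    have h2 : (IB * E2) * (E0 * ID) = (IB * ID) * E1^2 := by
      rw [← hE]; ring
    have h3 : (2 * (IC * E1))^2 < (IB * E2 + E0 * ID)^2 := by
      nlinarith [sq_nonneg (IB * E2 - E0 * ID), h1, h2]
    exact lt_of_pow_lt_pow_left₀ 2
      (by positivity : (0:ℝ) ≤ IB * E2 + E0 * ID) h3
  -- core inequality
  have hcore : ((ν + 2) * IB)^2 < ν * (ν + 4) * (IA * IC) := by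
    have expand : ν * (ν + 4) * (IA * IC) = (IB + E0) * (ID + E2) := by
      calc ν * (ν + 4) * (IA * IC) = (ν * IA) * ((ν + 4) * IC) := by ring
        _ = (IB + E0) * (ID + E2) := by rw [hr1, hr3]
    rw [expand, hr2]
    nlinarith [hcs, hE, hamgm]
  have lhs_eq : chiCDF (ν + 4) x * chiCDF ν x / (chiCDF (ν + 2) x) ^ 2
      = ν * (IA * IC) / ((ν + 2) * IB^2) := by
    rw [f0, f2, f4]
    field_simp
    ring
  rw [gt_iff_lt, lhs_eq, div_lt_div_iff₀ (by linarith) (by positivity)]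
  nlinarith [hcore, sq_nonneg IB]
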